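/- Fix a ∈ ℝ and define coefficients B(n,k) ∈ ℝ for n ≥ 1, 0 ≤ k ≤ n+1 by: B(1,1) = −a; B(n,0) = 0 and B(n,k) = 0 for k > n; and B(n+1,k) = (−k·a)·B(n,k−1) + (k·a − n)·B(n,k) for 1 ≤ k ≤ n+1. Then for every n ≥ 1 and every y > 0, the n-th derivative (taken within the interval (0,∞)) of the function g(y) = 1/(1 + y^a) satisfies g^{(n)}(y) = Σ_{k=1}^{n} B(n,k) · y^{a·k − n} / (1 + y^a)^{k+1}. -/

import Mathlib

open Real Finset

lemma termDeriv (a c : ℝ) (m : ℕ) (hm : 1 ≤ m) (y : ℝ) (hy : 0 < y) :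
    HasDerivAt (fun t : ℝ => t ^ c / (1 + t ^ a) ^ m)
      (c * y ^ (c - 1) / (1 + y ^ a) ^ m
        - (m : ℝ) * a * y ^ (c + a - 1) / (1 + y ^ a) ^ (m + 1)) y := by
  obtain ⟨j, rfl⟩ : ∃ j, m = j + 1 := ⟨m - 1, by omega⟩
  have hu : (0:ℝ) < 1 + y ^ a := by positivity
  have h1 : HasDerivAt (fun t : ℝ => t ^ c) (c * y ^ (c - 1)) y :=
    Real.hasDerivAt_rpow_const (Or.inl hy.ne')
  have h2 : HasDerivAt (fun t : ℝ => 1 + t ^ a) (a * y ^ (a - 1)) y :=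
    (Real.hasDerivAt_rpow_const (Or.inl hy.ne')).const_add 1
  have h3 := h2.pow (j + 1)
  have h4 := h1.div h3 (pow_ne_zero (j + 1) hu.ne')
  refine h4.congr_deriv ?_
  symm
  have e1 : y ^ (c + a - 1) = y ^ c * y ^ (a - 1) := by
    rw [← Real.rpow_add hy]; ring_nf
  have e2 : y ^ c = y ^ (c - 1) * y := by
    rw [show c = c - 1 + 1 by ring, Real.rpow_add hy, Real.rpow_one]; ring_nf
  simp only [Nat.add_sub_cancel, Pi.pow_apply]
  rw [e1, e2]
  field_simp
  ring

lemma sumDeriv (a : ℝ) (B : ℕ → ℕ → ℝ)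
    (hB0 : ∀ n, 1 ≤ n → B n 0 = 0)
    (hBtop : ∀ n k, 1 ≤ n → n < k → B n k = 0)
    (hBrec : ∀ n k, 1 ≤ n → 1 ≤ k → k ≤ n + 1 →
      B (n + 1) k = (-(k : ℝ) * a) * B n (k - 1) + ((k : ℝ) * a - (n : ℝ)) * B n k)
    (n : ℕ) (hn : 1 ≤ n) (y : ℝ) (hy : 0 < y) :
    HasDerivAt
      (fun t : ℝ => ∑ k ∈ Icc 1 n, B n k * t ^ (a * (k : ℝ) - (n : ℝ)) / (1 + t ^ a) ^ (k + 1))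
      (∑ k ∈ Icc 1 (n + 1),
        B (n + 1) k * y ^ (a * (k : ℝ) - ((n : ℝ) + 1)) / (1 + y ^ a) ^ (k + 1)) y := by
  have hu : (0:ℝ) < 1 + y ^ a := by positivity
  set g : ℕ → ℝ := fun j => y ^ (a * (j : ℝ) - ((n : ℝ) + 1)) / (1 + y ^ a) ^ (j + 1) with hg
  have key : ∀ k ∈ Icc 1 n,
      HasDerivAt (fun t : ℝ => B n k * t ^ (a * (k : ℝ) - (n : ℝ)) / (1 + t ^ a) ^ (k + 1))
        ((a * (k : ℝ) - (n : ℝ)) * B n k * g k - ((k : ℝ) + 1) * a * B n k * g (k + 1)) y := by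
    intro k hk
    have h := (termDeriv a (a * (k : ℝ) - (n : ℝ)) (k + 1) (by omega) y hy).const_mul (B n k)
    have e1 : a * (k : ℝ) - (n : ℝ) - 1 = a * (k : ℝ) - ((n : ℝ) + 1) := by ring
    have e2 : a * (k : ℝ) - (n : ℝ) + a - 1 = a * ((k : ℝ) + 1) - ((n : ℝ) + 1) := by ring
    simp only [mul_div_assoc] at h ⊢
    refine h.congr_deriv ?_
    symm
    rw [hg]
    simp only [e1, e2]
    push_cast
    ring
  have hsum := HasDerivAt.sum key
  rw [Finset.sum_fn] at hsum
  refine hsum.congr_deriv ?_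
  symm
  have hsplit : ∀ k ∈ Icc 1 (n + 1),
      B (n + 1) k * y ^ (a * (k : ℝ) - ((n : ℝ) + 1)) / (1 + y ^ a) ^ (k + 1)
        = -(k : ℝ) * a * B n (k - 1) * g k + ((k : ℝ) * a - (n : ℝ)) * B n k * g k := by
    intro k hk
    simp only [mem_Icc] at hk
    rw [hBrec n k hn hk.1 hk.2]
    simp only [hg]
    ring
  rw [Finset.sum_congr rfl hsplit, Finset.sum_add_distrib]
  have hA : ∑ k ∈ Icc 1 (n + 1), -(k : ℝ) * a * B n (k - 1) * g k
      = ∑ i ∈ Icc 1 n, (-((i : ℝ) + 1) * a * B n i * g (i + 1)) := by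
    rw [show Icc 1 (n + 1) = insert 1 (Icc 2 (n + 1)) by
      ext m; simp only [mem_Icc, Finset.mem_insert]; omega]
    rw [Finset.sum_insert (by simp)]
    have h1 : -((1 : ℕ) : ℝ) * a * B n (1 - 1) * g 1 = 0 := by
      norm_num [hB0 n hn]
    rw [h1, zero_add]
    rw [show Icc 2 (n + 1) = Finset.map ⟨Nat.succ, Nat.succ_injective⟩ (Icc 1 n) by
      ext m
      simp only [mem_Icc, Finset.mem_map, Function.Embedding.coeFn_mk, Nat.succ_eq_add_one]
      constructor
      · rintro ⟨h1, h2⟩; exact ⟨m - 1, ⟨by omega, by omega⟩, by omega⟩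
      · rintro ⟨i, ⟨h1, h2⟩, rfl⟩; omega]
    rw [Finset.sum_map]
    apply Finset.sum_congr rfl
    intro i hi
    simp only [Function.Embedding.coeFn_mk, Nat.succ_eq_add_one, Nat.add_sub_cancel]
    push_cast
    ring
  have hC : ∑ k ∈ Icc 1 (n + 1), ((k : ℝ) * a - (n : ℝ)) * B n k * g k
      = ∑ i ∈ Icc 1 n, ((i : ℝ) * a - (n : ℝ)) * B n i * g i := by
    rw [Finset.sum_Icc_succ_top (by omega), hBtop n (n + 1) hn (by omega)]
    simp
  rw [hA, hC, ← Finset.sum_add_distrib]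
  apply Finset.sum_congr rfl
  intro i hi
  ring

theorem sigtron_stmt9 (a : ℝ) (B : ℕ → ℕ → ℝ)
    (hB11 : B 1 1 = -a)
    (hB0 : ∀ n, 1 ≤ n → B n 0 = 0)
    (hBtop : ∀ n k, 1 ≤ n → n < k → B n k = 0)
    (hBrec : ∀ n k, 1 ≤ n → 1 ≤ k → k ≤ n + 1 →
      B (n + 1) k = (-(k : ℝ) * a) * B n (k - 1) + ((k : ℝ) * a - (n : ℝ)) * B n k)
    (n : ℕ) (hn : 1 ≤ n) (y : ℝ) (hy : 0 < y) :
    iteratedDerivWithin n (fun t : ℝ => 1 / (1 + t ^ a)) (Set.Ioi (0 : ℝ)) y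
      = ∑ k ∈ Finset.Icc 1 n, B n k * y ^ (a * (k : ℝ) - (n : ℝ)) / (1 + y ^ a) ^ (k + 1) := by
  have main : ∀ m, 1 ≤ m → ∀ x ∈ Set.Ioi (0 : ℝ),
      iteratedDerivWithin m (fun t : ℝ => 1 / (1 + t ^ a)) (Set.Ioi (0 : ℝ)) x
        = ∑ k ∈ Finset.Icc 1 m, B m k * x ^ (a * (k : ℝ) - (m : ℝ)) / (1 + x ^ a) ^ (k + 1) := by
    intro m hm
    induction m with
    | zero => omega
    | succ m ih =>
      rcases Nat.lt_or_ge m 1 with hm0 | hm1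
      · -- base case: m = 0, so m + 1 = 1
        interval_cases m
        intro x hx
        have hx' : (0 : ℝ) < x := hx
        have hu : (0:ℝ) < 1 + x ^ a := by positivity
        rw [iteratedDerivWithin_one,
            derivWithin_of_isOpen isOpen_Ioi hx]
        have h2 : HasDerivAt (fun t : ℝ => 1 + t ^ a) (a * x ^ (a - 1)) x :=
          (Real.hasDerivAt_rpow_const (Or.inl hx'.ne')).const_add 1
        have hd := (hasDerivAt_const x (1:ℝ)).div h2 hu.ne'
        rw [show (fun t : ℝ => 1 / (1 + t ^ a)) = (fun _ => (1:ℝ)) / fun t => 1 + t ^ a from rfl, hd.deriv]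
        simp only [Finset.Icc_self, Finset.sum_singleton, hB11]
        rw [show a * ((1:ℕ) : ℝ) - ((1:ℕ) : ℝ) = a - 1 by push_cast; ring]
        field_simp
        ring
      · intro x hx
        rw [iteratedDerivWithin_succ,
            derivWithin_of_isOpen isOpen_Ioi hx]
        have hev : (iteratedDerivWithin m (fun t : ℝ => 1 / (1 + t ^ a)) (Set.Ioi (0:ℝ)))
            =ᶠ[nhds x] (fun z : ℝ =>
              ∑ k ∈ Finset.Icc 1 m, B m k * z ^ (a * (k : ℝ) - (m : ℝ)) / (1 + z ^ a) ^ (k + 1)) := by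
          filter_upwards [isOpen_Ioi.mem_nhds hx] with z hz using ih hm1 z hz
        rw [hev.deriv_eq, (sumDeriv a B hB0 hBtop hBrec m hm1 x hx).deriv]
        apply Finset.sum_congr rfl
        intro k hk
        push_cast
        ring

  exact main n hn y hy
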